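/- Let L > m > 0, let ᾱ(β) be defined by ᾱ(β) = 2(1+β)/L for β ≤ (√(L/m) − √(L/m−1))² and ᾱ(β) = 2(1−β)²/((1+β)(L+m) − 4√(βLm)) otherwise, and suppose 0 ≤ β < 1 and 0 < α < ᾱ(β). Then the polynomial z² + ((m+L)α/2 − 1 − β)z + β is Schur stable, i.e. both of its complex roots have modulus strictly less than 1. -/

import Mathlib

open Real Complex

/-- The GHB stepsize bound `ᾱ(β)` of Theorem `T.SPR`. -/
noncomputable def alphaBar (m L β : ℝ) : ℝ :=
  if β ≤ (Real.sqrt (L / m) - Real.sqrt (L / m - 1)) ^ 2 then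
    2 * (1 + β) / L
  else
    2 * (1 - β) ^ 2 / ((1 + β) * (L + m) - 4 * Real.sqrt (β * L * m))

/-- Auxiliary: the bound `ᾱ(β)` never exceeds `2(1+β)/L`. -/
theorem alphaBar_le (m L β : ℝ) (hm : 0 < m) (hmL : m < L) (hβ0 : 0 ≤ β) (hβ1 : β < 1) :
    alphaBar m L β ≤ 2 * (1 + β) / L := by
  have hL : 0 < L := hm.trans hmL
  unfold alphaBar
  split
  · exact le_refl _
  · set a := Real.sqrt β with hadef
    set c := Real.sqrt L with hcdef
    set d := Real.sqrt m with hddef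
    have ha2 : a ^ 2 = β := Real.sq_sqrt hβ0
    have hc2 : c ^ 2 = L := Real.sq_sqrt hL.le
    have hd2 : d ^ 2 = m := Real.sq_sqrt hm.le
    have ha0 : 0 ≤ a := Real.sqrt_nonneg _
    have hc0 : 0 < c := Real.sqrt_pos.mpr hL
    have hd0 : 0 < d := Real.sqrt_pos.mpr hm
    have hdc : d < c := by
      have := Real.sqrt_lt_sqrt hm.le hmL
      simpa [hcdef, hddef] using this
    have hs : Real.sqrt (β * L * m) = a * c * d := by
      rw [Real.sqrt_mul (by positivity), Real.sqrt_mul hβ0]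
    rw [hs]
    have h1 : 0 < (c - d) ^ 2 := pow_pos (sub_pos.mpr hdc) 2
    have h2 : 0 ≤ 2 * c * d * (1 - a) ^ 2 := by positivity
    have hD : 0 < (1 + β) * (L + m) - 4 * (a * c * d) := by
      rw [← ha2, ← hc2, ← hd2]
      nlinarith [h1, h2, mul_nonneg (sq_nonneg a) h1.le]
    rw [div_le_div_iff₀ hD hL]
    rw [← ha2, ← hc2, ← hd2]
    nlinarith [sq_nonneg (2 * a * c - (1 + a ^ 2) * d)]

/-- For `0 ≤ β < 1` and `0 < α < ᾱ(β)`, the polynomial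
`z² + ((m+L)α/2 − 1 − β)z + β` is Schur stable: every complex root has
modulus strictly less than 1. -/
theorem averaged_polynomial_schur_stable (m L : ℝ) (hm : 0 < m) (hmL : m < L)
    (α β : ℝ) (hβ0 : 0 ≤ β) (hβ1 : β < 1) (hα0 : 0 < α) (hα1 : α < alphaBar m L β) :
    ∀ z : ℂ,
      z ^ 2 + (((m + L) * α / 2 - 1 - β : ℝ) : ℂ) * z + (β : ℂ) = 0 →
      ‖z‖ < 1 := by
  have hL : 0 < L := hm.trans hmL
  have hbar := alphaBar_le m L β hm hmL hβ0 hβ1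
  have hαL : α * L < 2 * (1 + β) := by
    have : α < 2 * (1 + β) / L := lt_of_lt_of_le hα1 hbar
    calc α * L < (2 * (1 + β) / L) * L := by
          exact mul_lt_mul_of_pos_right this hL
      _ = 2 * (1 + β) := by field_simp
  set b : ℝ := (m + L) * α / 2 - 1 - β with hbdef
  have hb1 : -(1 + β) < b := by
    have : 0 < (m + L) * α := by positivity
    simp only [hbdef]; linarith
  have hb2 : b < 1 + β := by
    have h1 : (m + L) * α < 2 * L * α := by nlinarith
    simp only [hbdef]; nlinarith
  intro z hz
  by_cases him : z.im = 0
  · -- real root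
    set x := z.re with hxdef
    have hzx : z = (x : ℂ) := by
      apply Complex.ext <;> simp [him, hxdef]
    rw [hzx] at hz
    have hx : x ^ 2 + b * x + β = 0 := by
      have : ((x ^ 2 + b * x + β : ℝ) : ℂ) = 0 := by push_cast; linear_combination hz
      exact_mod_cast this
    rw [hzx, Complex.norm_real, Real.norm_eq_abs]
    by_contra h
    push_neg at h
    rcases abs_cases x with ⟨h1, h2⟩ | ⟨h1, h2⟩
    · nlinarith
    · nlinarith
  · -- complex root: the conjugate is the other root
    have hconj : (starRingEnd ℂ) z ^ 2 + (b : ℂ) * (starRingEnd ℂ) z + (β : ℂ) = 0 := by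
      have := congrArg (starRingEnd ℂ) hz
      simpa using this
    have hzw : z * (-(b : ℂ) - z) = (β : ℂ) := by linear_combination -hz
    have hne : (starRingEnd ℂ) z ≠ z := by
      intro h
      exact him (by simpa using Complex.conj_eq_iff_im.mp h)
    have hfac : ((starRingEnd ℂ) z - z) * ((starRingEnd ℂ) z - (-(b : ℂ) - z)) = 0 := by
      linear_combination hconj - hz
    have hkey : (starRingEnd ℂ) z = -(b : ℂ) - z := by
      rcases mul_eq_zero.mp hfac with h | h
      · exact absurd (sub_eq_zero.mp h) hne
      · exact sub_eq_zero.mp h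
    have hnorm : (Complex.normSq z : ℂ) = (β : ℂ) := by
      rw [← Complex.mul_conj, hkey]; exact hzw
    have hnorm' : Complex.normSq z = β := by exact_mod_cast hnorm
    have habs : ‖z‖ ^ 2 = β := by rw [Complex.sq_norm, hnorm']
    nlinarith [norm_nonneg z]
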